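/- Let V = ⋃ V_n be an exhaustion of a countable-dimensional complex vector space by finite-dimensional subspaces, with a Hermitian (or bilinear) form ω such that each vector of a fixed basis E lying outside V_n is ω-orthogonal to V_n. Then a subspace A of V compatible with E (i.e. spanned by A ∩ V_n together with basis vectors outside some V_{n₀}) is nondegenerate with respect to ω if and only if the restriction of ω to A ∩ V_n is nondegenerate for all sufficiently large n. -/

import Mathlib

open Submodule

/-- Let `V` be countable-dimensional over `ℂ` with basis `(eᵢ)_{i ∈ ℕ}` and exhaustion
`Vₙ = span{eᵢ : i < n}`, and let `ω` be a nondegenerate Hermitian form such that every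
basis vector outside `Vₙ` is orthogonal to `Vₙ`. If a subspace `A` is spanned by
`A ∩ V_{n₀}` together with the basis vectors of index `≥ n₀` that lie in `A`, then `A`
is nondegenerate with respect to `ω` if and only if the restriction of `ω` to `A ∩ Vₙ`
is nondegenerate for all sufficiently large `n`. -/
theorem nondegenerate_iff_eventually_nondegenerate
    {V : Type*} [AddCommGroup V] [Module ℂ V]
    (E : Module.Basis ℕ ℂ V)
    (Vn : ℕ → Submodule ℂ V) (hVn : ∀ n, Vn n = Submodule.span ℂ (E '' {i | i < n}))
    (ω : V →ₗ[ℂ] V →ₛₗ[starRingEnd ℂ] ℂ)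
    (hherm : ∀ x y : V, ω y x = star (ω x y))
    (hωnd : ∀ x : V, (∀ y : V, ω x y = 0) → x = 0)
    (horth : ∀ n : ℕ, ∀ i : ℕ, n ≤ i → ∀ v ∈ Vn n, ω (E i) v = 0)
    (A : Submodule ℂ V) (n₀ : ℕ)
    (hA : A = (A ⊓ Vn n₀) ⊔ Submodule.span ℂ (E '' {i | n₀ ≤ i ∧ E i ∈ A})) :
    (∀ x ∈ A, (∀ y ∈ A, ω x y = 0) → x = 0) ↔
    ∃ N : ℕ, ∀ n : ℕ, N ≤ n →
      ∀ x ∈ A ⊓ Vn n, (∀ y ∈ A ⊓ Vn n, ω x y = 0) → x = 0 := by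
  constructor
  · intro h
    refine ⟨n₀, fun n hn x hx hxo => ?_⟩
    obtain ⟨hxA, hxV⟩ := hx
    refine h x hxA fun y hy => ?_
    have hVmono : Vn n₀ ≤ Vn n := by
      rw [hVn, hVn]
      exact span_mono (Set.image_mono fun i hi => lt_of_lt_of_le hi hn)
    have hAle : A ≤ (A ⊓ Vn n) ⊔ Submodule.span ℂ (E '' {i | n ≤ i ∧ E i ∈ A}) := by
      conv_lhs => rw [hA]
      refine sup_le (le_trans (inf_le_inf_left _ hVmono) le_sup_left) ?_
      rw [span_le]
      rintro _ ⟨i, ⟨hi1, hi2⟩, rfl⟩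
      rcases lt_or_ge i n with hlt | hge
      · refine Submodule.mem_sup_left ⟨hi2, ?_⟩
        rw [hVn]
        exact subset_span ⟨i, hlt, rfl⟩
      · exact Submodule.mem_sup_right (subset_span ⟨i, ⟨hge, hi2⟩, rfl⟩)
    obtain ⟨y₁, hy₁, y₂, hy₂, rfl⟩ := Submodule.mem_sup.mp (hAle hy)
    have h2 : ω x y₂ = 0 := by
      have : Submodule.span ℂ (E '' {i | n ≤ i ∧ E i ∈ A}) ≤ LinearMap.ker (ω x) := by
        rw [span_le]
        rintro _ ⟨i, ⟨hni, hiA⟩, rfl⟩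
        simp only [SetLike.mem_coe, LinearMap.mem_ker]
        rw [hherm (E i) x, horth n i hni x hxV, star_zero]
      exact this hy₂
    rw [map_add, hxo y₁ hy₁, h2, add_zero]
  · rintro ⟨N, hN⟩ x hxA hxo
    set F := (E.repr x).support with hF
    set n := max N (F.sup id + 1) with hn
    have hxV : x ∈ Vn n := by
      rw [hVn]
      refine span_mono ?_ (Module.Basis.mem_span_repr_support E x)
      refine Set.image_mono fun i hi => ?_
      exact lt_of_lt_of_le (Nat.lt_succ_of_le (Finset.le_sup (f := id) hi))
        (le_max_right _ _)
    exact hN n (le_max_left _ _) x ⟨hxA, hxV⟩ fun y hy => hxo y hy.1
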